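/- For every integer n ≥ 3, there exists a 3-coloring χ of E(K_n) such that for every color c ∈ {1,2,3}, every connected component of the color-c graph contains at most k(n) vertices. -/

import Mathlib

def kfun (n : ℕ) : ℕ := if n % 4 = 2 then n / 2 + 1 else (n + 1) / 2

def colorGraph {n : ℕ} (χ : Sym2 (Fin n) → Fin 3) (c : Fin 3) : SimpleGraph (Fin n) :=
  SimpleGraph.fromEdgeSet {e | χ e = c}

def mycol (a b : ℕ) : Fin 3 :=
  ⟨max ((a % 4) ^^^ (b % 4)) 1 - 1, by
    have h1 : a % 4 < 2 ^ 2 := by omega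
    have h2 : b % 4 < 2 ^ 2 := by omega
    have := Nat.xor_lt_two_pow h1 h2
    omega⟩

lemma mycol_comm (a b : ℕ) : mycol a b = mycol b a := by
  simp [mycol, Nat.xor_comm]

lemma mycol_eq (a b : ℕ) (c : Fin 3) (h : mycol a b = c) :
    (a % 4) ^^^ (b % 4) = 0 ∨ (a % 4) ^^^ (b % 4) = c.val + 1 := by
  have ha : a % 4 < 4 := by omega
  have hb : b % 4 < 4 := by omega
  have hv : (c : ℕ) = max ((a % 4) ^^^ (b % 4)) 1 - 1 := by
    rw [← h]; rfl
  set A := a % 4 with hA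
  set B := b % 4 with hB
  clear_value A B
  clear h hA hB
  interval_cases A <;> interval_cases B <;> simp_all

lemma count_range (t n : ℕ) (ht : t < 4) :
    ((Finset.range n).filter (fun i => i % 4 = t)).card = (n + 3 - t) / 4 := by
  induction n with
  | zero => simp; omega
  | succ m ih =>
      rw [Finset.range_add_one, Finset.filter_insert]
      by_cases h : m % 4 = t
      · rw [if_pos h, Finset.card_insert_of_notMem (by simp), ih]
        omega
      · rw [if_neg h, ih]; omega

lemma count_fin (n t : ℕ) (ht : t < 4) :
    (Finset.univ.filter (fun u : Fin n => u.val % 4 = t)).card = (n + 3 - t) / 4 := by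
  rw [← count_range t n ht]
  apply Finset.card_bij (fun u _ => u.val)
  · intro u hu; simp at hu ⊢; simp_all
  · intro u _ w _ h; exact Fin.val_injective h
  · intro i hi
    simp at hi
    refine ⟨⟨i, hi.1⟩, ?_, rfl⟩
    simpa using hi.2

theorem gerencser_gyarfas_sharp (n : ℕ) (hn : 3 ≤ n) :
    ∃ χ : Sym2 (Fin n) → Fin 3, ∀ c : Fin 3, ∀ v : Fin n,
      {u : Fin n | (colorGraph χ c).Reachable v u}.ncard ≤ kfun n := by
  refine ⟨Sym2.lift ⟨fun u v => mycol u.val v.val, fun u v => mycol_comm _ _⟩, ?_⟩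
  intro c v
  set χ : Sym2 (Fin n) → Fin 3 :=
    Sym2.lift ⟨fun u v => mycol u.val v.val, fun u v => mycol_comm _ _⟩ with hχ
  -- step lemma
  have step : ∀ u w : Fin n, (colorGraph χ c).Adj u w →
      (u.val % 4) ^^^ (w.val % 4) = 0 ∨ (u.val % 4) ^^^ (w.val % 4) = c.val + 1 := by
    intro u w h
    rw [colorGraph, SimpleGraph.fromEdgeSet_adj] at h
    exact mycol_eq u.val w.val c h.1
  have key : ∀ a b : Fin n, (colorGraph χ c).Walk a b →
      (a.val % 4) ^^^ (b.val % 4) = 0 ∨ (a.val % 4) ^^^ (b.val % 4) = c.val + 1 := by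
    intro a b p
    induction p with
    | nil => left; exact Nat.xor_self _
    | @cons a m b h p ih =>
        have h1 := step _ _ h
        have comp : (a.val % 4) ^^^ (b.val % 4)
            = ((a.val % 4) ^^^ (m.val % 4)) ^^^ ((m.val % 4) ^^^ (b.val % 4)) := by
          rw [Nat.xor_assoc, ← Nat.xor_assoc (m.val % 4), Nat.xor_self, Nat.zero_xor]
        rcases h1 with h1 | h1 <;> rcases ih with ih | ih <;>
          rw [comp, h1, ih] <;> simp [Nat.xor_self]
  set r := v.val % 4 with hr
  set x := c.val + 1 with hx
  set s := r ^^^ x with hs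
  have hr4 : r < 4 := by omega
  have hx4 : x < 4 ∧ 1 ≤ x := by have := c.is_lt; omega
  have hs4 : s < 4 := by
    have h1 : r < 2 ^ 2 := by omega
    have h2 : x < 2 ^ 2 := by omega
    have := Nat.xor_lt_two_pow h1 h2
    omega
  have hrs : r ≠ s := by
    intro h
    have : r ^^^ r = r ^^^ s := by rw [← h]
    rw [Nat.xor_self, hs, ← Nat.xor_assoc, Nat.xor_self, Nat.zero_xor] at this
    omega
  have hsub : {u : Fin n | (colorGraph χ c).Reachable v u}
      ⊆ ↑(Finset.univ.filter (fun u : Fin n => u.val % 4 = r ∨ u.val % 4 = s)) := by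
    intro u hu
    obtain ⟨p⟩ := hu
    have := key v u p
    simp only [Finset.coe_filter, Set.mem_setOf_eq, Finset.mem_univ, true_and]
    rcases this with h | h
    · left; have := xor_eq_zero_iff.mp h; omega
    · right
      have : r ^^^ (r ^^^ (u.val % 4)) = r ^^^ x := by rw [h]
      rwa [← Nat.xor_assoc, Nat.xor_self, Nat.zero_xor] at this
  calc {u : Fin n | (colorGraph χ c).Reachable v u}.ncard
      ≤ (↑(Finset.univ.filter (fun u : Fin n => u.val % 4 = r ∨ u.val % 4 = s)) :
          Set (Fin n)).ncard := Set.ncard_le_ncard hsub (Set.toFinite _)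
    _ = (Finset.univ.filter (fun u : Fin n => u.val % 4 = r ∨ u.val % 4 = s)).card :=
        Set.ncard_coe_finset _
    _ ≤ kfun n := by
        rw [Finset.filter_or, Finset.card_union_of_disjoint, count_fin _ _ hr4, count_fin _ _ hs4]
        · unfold kfun; split_ifs <;> omega
        · apply Finset.disjoint_filter_filter'
          exact Set.disjoint_left.mpr (fun u h1 h2 => hrs (h1 ▸ h2 ▸ rfl))
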